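/- Let H ∈ (0, 1/2), let r ∈ (1, (H+1/2)^{−1}), let q := r/(r−1), and let c : ℝ → ℝ be measurable and even with ‖c‖_{L^q(ℝ)} < ∞ and ∫₀^{∞} v^{1/2−H}|c(v)| dv < ∞. Then there exists a constant C > 0, depending only on H, r, ‖c‖_{L^q(ℝ)} and ∫₀^{∞} v^{1/2−H}|c(v)| dv, such that for all T ≥ 1: (1/T²)·∫₁^{T} ∫₀^{t₁−1} ( ∫_{t₂}^{t₁} ∫₀^{t₂} (t₁−s₁)^{−H−1/2}(t₂−s₂)^{−H−1/2} |c(s₁−s₂)| ds₂ ds₁ )² dt₂ dt₁ ≤ C·T^{1/r − 1/2 − 3H}. -/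

import Mathlib

open Real MeasureTheory

open Set
open scoped ENNReal

section helpers

lemma int_le_lint {f : ℝ → ℝ} {s : Set ℝ} (hs : MeasurableSet s) (hf : ∀ x ∈ s, 0 ≤ f x) :
    ∫ x in s, f x ≤ (∫⁻ x in s, ENNReal.ofReal (f x)).toReal := by
  by_cases hint : IntegrableOn f s volume
  · rw [integral_eq_lintegral_of_nonneg_ae ((ae_restrict_iff' hs).2 (ae_of_all _ hf))
      hint.aestronglyMeasurable]
  · rw [MeasureTheory.integral_undef hint]; exact ENNReal.toReal_nonneg

lemma lint_rpow_sub_left {p : ℝ} (hp1 : -1 < p) {x y : ℝ} (hxy : x ≤ y) :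
    ∫⁻ s in Set.Ioc x y, ENNReal.ofReal ((y - s) ^ p) =
      ENNReal.ofReal ((y - x) ^ (p + 1) / (p + 1)) := by
  have hii : IntervalIntegrable (fun s : ℝ => (y - s) ^ p) volume x y := by
    have h : IntervalIntegrable (fun u : ℝ => u ^ p) volume (y - y) (y - x) :=
      intervalIntegral.intervalIntegrable_rpow' hp1
    simpa using (h.comp_sub_left y).symm
  have hnn : 0 ≤ᵐ[volume.restrict (Set.Ioc x y)] fun s : ℝ => (y - s) ^ p :=
    (ae_restrict_iff' measurableSet_Ioc).2 (ae_of_all _ fun s hs =>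
      Real.rpow_nonneg (by linarith [hs.2]) _)
  rw [← ofReal_integral_eq_lintegral_ofReal hii.1 hnn]
  congr 1
  rw [← intervalIntegral.integral_of_le hxy,
    intervalIntegral.integral_comp_sub_left (fun u : ℝ => u ^ p) y, sub_self,
    integral_rpow (Or.inl hp1), Real.zero_rpow (by linarith : p + 1 ≠ 0)]
  ring

lemma lint_rpow_sub_right {p : ℝ} (hp1 : -1 < p) {x y : ℝ} (hxy : x ≤ y) :
    ∫⁻ s in Set.Ioc x y, ENNReal.ofReal ((s - x) ^ p) =
      ENNReal.ofReal ((y - x) ^ (p + 1) / (p + 1)) := by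
  have hii : IntervalIntegrable (fun s : ℝ => (s - x) ^ p) volume x y := by
    have h : IntervalIntegrable (fun u : ℝ => u ^ p) volume (x - x) (y - x) :=
      intervalIntegral.intervalIntegrable_rpow' hp1
    simpa using h.comp_sub_right x
  have hnn : 0 ≤ᵐ[volume.restrict (Set.Ioc x y)] fun s : ℝ => (s - x) ^ p :=
    (ae_restrict_iff' measurableSet_Ioc).2 (ae_of_all _ fun s hs =>
      Real.rpow_nonneg (by linarith [hs.1]) _)
  rw [← ofReal_integral_eq_lintegral_ofReal hii.1 hnn]
  congr 1
  rw [← intervalIntegral.integral_of_le hxy,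
    intervalIntegral.integral_comp_sub_right (fun u : ℝ => u ^ p) x, sub_self,
    integral_rpow (Or.inl hp1), Real.zero_rpow (by linarith : p + 1 ≠ 0)]
  ring

lemma setLIntegral_eq_ind {s : Set ℝ} (hs : MeasurableSet s) (g : ℝ → ℝ≥0∞) :
    ∫⁻ x in s, g x = ∫⁻ x, s.indicator 1 x * g x := by
  rw [← lintegral_indicator hs]
  refine lintegral_congr fun x => ?_
  by_cases hx : x ∈ s <;> simp [hx]

lemma ind_ne_top (s : Set ℝ) (x : ℝ) : s.indicator (1 : ℝ → ℝ≥0∞) x ≠ ⊤ := by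
  by_cases h : x ∈ s <;> simp [h]

end helpers

lemma holder_step (H r q : ℝ) (hH2 : H < 1/2) (hr1 : 1 < r)
    (hra : r * (H + 1/2) < 1) (hpq : r.HolderConjugate q)
    (c : ℝ → ℝ) (hc : Measurable c)
    (hcq : eLpNorm c (ENNReal.ofReal q) volume ≠ ⊤)
    {t₁ t₂ : ℝ} (ht₂ : 0 < t₂) (ht : t₂ ≤ t₁) :
    (∫⁻ s₁ in Set.Ioc t₂ t₁, ∫⁻ s₂ in Set.Ioc 0 t₂,
        ENNReal.ofReal ((t₁ - s₁) ^ (-H - 1/2)) *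
          (ENNReal.ofReal ((t₂ - s₂) ^ (-H - 1/2)) * ENNReal.ofReal |c (s₁ - s₂)|)) ≤
      ENNReal.ofReal ((1 - r * (H + 1/2))⁻¹ ^ (1/r) * (1/2 - H)⁻¹) *
        eLpNorm c (ENNReal.ofReal q) volume * ENNReal.ofReal (t₁ ^ (1/r - 2*H)) := by
  have hr0 : (0:ℝ) < r := by linarith
  have hq0 : (0:ℝ) < q := hpq.symm.pos
  have hp1 : (-1:ℝ) < -H - 1/2 := by linarith
  have hpr1 : (-1:ℝ) < (-H - 1/2) * r := by nlinarith
  have hE' : (0:ℝ) < (-H - 1/2) * r + 1 := by linarith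
  have h12 : (0:ℝ) < 1/2 - H := by linarith
  have ht₁ : (0:ℝ) < t₁ := lt_of_lt_of_le ht₂ ht
  set cq := eLpNorm c (ENNReal.ofReal q) volume with hcqd
  set Q := ENNReal.ofReal ((t₂ ^ ((-H - 1/2) * r + 1) / ((-H - 1/2) * r + 1)) ^ (1/r)) * cq
    with hQdef
  have hQtop : Q ≠ ⊤ := ENNReal.mul_ne_top ENNReal.ofReal_ne_top hcq
  have key : ∀ s₁ : ℝ, (∫⁻ s₂ in Set.Ioc 0 t₂,
      ENNReal.ofReal ((t₂ - s₂) ^ (-H - 1/2)) * ENNReal.ofReal |c (s₁ - s₂)|) ≤ Q := by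
    intro s₁
    have hmul := ENNReal.lintegral_mul_le_Lp_mul_Lq (volume.restrict (Set.Ioc 0 t₂)) hpq
      (f := fun s₂ => ENNReal.ofReal ((t₂ - s₂) ^ (-H - 1/2)))
      (g := fun s₂ => ENNReal.ofReal |c (s₁ - s₂)|)
      (by fun_prop : Measurable fun s₂ : ℝ => ENNReal.ofReal ((t₂ - s₂) ^ (-H - 1/2))).aemeasurable
      (by fun_prop : Measurable fun s₂ : ℝ => ENNReal.ofReal |c (s₁ - s₂)|).aemeasurable
    refine le_trans hmul ?_
    have h1 : (∫⁻ s₂ in Set.Ioc 0 t₂, ENNReal.ofReal ((t₂ - s₂) ^ (-H - 1/2)) ^ r)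
        = ENNReal.ofReal ((t₂ - 0) ^ ((-H - 1/2) * r + 1) / ((-H - 1/2) * r + 1)) := by
      rw [setLIntegral_congr_fun_ae measurableSet_Ioc (ae_of_all _
          fun s₂ (hs₂ : s₂ ∈ Set.Ioc 0 t₂) =>
          show ENNReal.ofReal ((t₂ - s₂) ^ (-H - 1/2)) ^ r
              = ENNReal.ofReal ((t₂ - s₂) ^ ((-H - 1/2) * r)) by
            rw [ENNReal.ofReal_rpow_of_nonneg (Real.rpow_nonneg (by linarith [hs₂.2]) _) hr0.le,
              ← Real.rpow_mul (by linarith [hs₂.2])]),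
        lint_rpow_sub_left hpr1 ht₂.le]
    have h2 : (∫⁻ s₂ in Set.Ioc 0 t₂, ENNReal.ofReal |c (s₁ - s₂)| ^ q) ^ (1/q) ≤ cq := by
      have hle : (∫⁻ s₂ in Set.Ioc 0 t₂, ENNReal.ofReal |c (s₁ - s₂)| ^ q)
          ≤ ∫⁻ x, ‖c x‖ₑ ^ q := by
        refine le_trans (setLIntegral_le_lintegral _ _) (le_of_eq ?_)
        have h := (Measure.measurePreserving_sub_left (volume : Measure ℝ) s₁).lintegral_comp
          (f := fun x => ENNReal.ofReal |c x| ^ q) (by fun_prop)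
        rw [h]
        simp_rw [Real.enorm_eq_ofReal_abs]
      calc (∫⁻ s₂ in Set.Ioc 0 t₂, ENNReal.ofReal |c (s₁ - s₂)| ^ q) ^ (1/q)
          ≤ (∫⁻ x, ‖c x‖ₑ ^ q) ^ (1/q) := ENNReal.rpow_le_rpow hle (by positivity)
        _ = cq := by
            rw [hcqd, eLpNorm_eq_lintegral_rpow_enorm_toReal (ENNReal.ofReal_pos.2 hq0).ne'
              ENNReal.ofReal_ne_top, ENNReal.toReal_ofReal hq0.le]
    rw [h1, sub_zero, ENNReal.ofReal_rpow_of_nonneg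
      (div_nonneg (Real.rpow_nonneg ht₂.le _) hE'.le) (by positivity)] at *
    exact mul_le_mul' le_rfl h2
  have hexp : (1/2 - H) + ((-H - 1/2) * r + 1) * (1/r) = 1/r - 2*H := by
    field_simp
    ring
  have hreal : (t₁ - t₂) ^ (-H - 1/2 + 1) / (-H - 1/2 + 1) *
      ((t₂ ^ ((-H - 1/2) * r + 1) / ((-H - 1/2) * r + 1)) ^ (1/r))
      ≤ (1 - r * (H + 1/2))⁻¹ ^ (1/r) * (1/2 - H)⁻¹ * t₁ ^ (1/r - 2*H) := by
    rw [div_eq_mul_inv ((t₁ - t₂) ^ (-H - 1/2 + 1)),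
      div_eq_mul_inv (t₂ ^ ((-H - 1/2) * r + 1)),
      show (-H - 1/2 + 1 : ℝ) = 1/2 - H by ring,
      show (1 - r * (H + 1/2) : ℝ) = (-H - 1/2) * r + 1 by ring,
      Real.mul_rpow (Real.rpow_nonneg ht₂.le _) (inv_nonneg.2 hE'.le),
      ← Real.rpow_mul ht₂.le, ← hexp, Real.rpow_add ht₁]
    have b1 : (t₁ - t₂) ^ (1/2 - H) ≤ t₁ ^ (1/2 - H) :=
      Real.rpow_le_rpow (by linarith) (by linarith) h12.le
    have b2 : t₂ ^ (((-H - 1/2) * r + 1) * (1/r)) ≤ t₁ ^ (((-H - 1/2) * r + 1) * (1/r)) :=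
      Real.rpow_le_rpow ht₂.le ht (by positivity)
    have b3 : (t₁ - t₂) ^ (1/2 - H) * t₂ ^ (((-H - 1/2) * r + 1) * (1/r))
        ≤ t₁ ^ (1/2 - H) * t₁ ^ (((-H - 1/2) * r + 1) * (1/r)) :=
      mul_le_mul b1 b2 (Real.rpow_nonneg ht₂.le _) (Real.rpow_nonneg ht₁.le _)
    have hnn : (0:ℝ) ≤ (1/2 - H)⁻¹ * ((-H - 1/2) * r + 1)⁻¹ ^ (1/r) :=
      mul_nonneg (inv_nonneg.2 h12.le) (Real.rpow_nonneg (inv_nonneg.2 hE'.le) _)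
    calc (t₁ - t₂) ^ (1/2 - H) * (1/2 - H)⁻¹ *
          (t₂ ^ (((-H - 1/2) * r + 1) * (1/r)) * ((-H - 1/2) * r + 1)⁻¹ ^ (1/r))
        = ((t₁ - t₂) ^ (1/2 - H) * t₂ ^ (((-H - 1/2) * r + 1) * (1/r))) *
            ((1/2 - H)⁻¹ * ((-H - 1/2) * r + 1)⁻¹ ^ (1/r)) := by ring
      _ ≤ (t₁ ^ (1/2 - H) * t₁ ^ (((-H - 1/2) * r + 1) * (1/r))) *
            ((1/2 - H)⁻¹ * ((-H - 1/2) * r + 1)⁻¹ ^ (1/r)) :=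
          mul_le_mul_of_nonneg_right b3 hnn
      _ = ((-H - 1/2) * r + 1)⁻¹ ^ (1/r) * (1/2 - H)⁻¹ *
            (t₁ ^ (1/2 - H) * t₁ ^ (((-H - 1/2) * r + 1) * (1/r))) := by ring
  calc (∫⁻ s₁ in Set.Ioc t₂ t₁, ∫⁻ s₂ in Set.Ioc 0 t₂,
        ENNReal.ofReal ((t₁ - s₁) ^ (-H - 1/2)) *
          (ENNReal.ofReal ((t₂ - s₂) ^ (-H - 1/2)) * ENNReal.ofReal |c (s₁ - s₂)|))
      = ∫⁻ s₁ in Set.Ioc t₂ t₁, ENNReal.ofReal ((t₁ - s₁) ^ (-H - 1/2)) *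
          ∫⁻ s₂ in Set.Ioc 0 t₂,
            ENNReal.ofReal ((t₂ - s₂) ^ (-H - 1/2)) * ENNReal.ofReal |c (s₁ - s₂)| :=
        lintegral_congr fun s₁ => lintegral_const_mul' _ _ ENNReal.ofReal_ne_top
    _ ≤ ∫⁻ s₁ in Set.Ioc t₂ t₁, ENNReal.ofReal ((t₁ - s₁) ^ (-H - 1/2)) * Q :=
        lintegral_mono fun s₁ => mul_le_mul_right (key s₁) _
    _ = (∫⁻ s₁ in Set.Ioc t₂ t₁, ENNReal.ofReal ((t₁ - s₁) ^ (-H - 1/2))) * Q :=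
        lintegral_mul_const' _ _ hQtop
    _ = ENNReal.ofReal ((t₁ - t₂) ^ (-H - 1/2 + 1) / (-H - 1/2 + 1)) * Q := by
        rw [lint_rpow_sub_left hp1 ht]
    _ = ENNReal.ofReal ((t₁ - t₂) ^ (-H - 1/2 + 1) / (-H - 1/2 + 1) *
          ((t₂ ^ ((-H - 1/2) * r + 1) / ((-H - 1/2) * r + 1)) ^ (1/r))) * cq := by
        rw [hQdef, ← mul_assoc, ← ENNReal.ofReal_mul
          (div_nonneg (Real.rpow_nonneg (by linarith) _) (by linarith))]
    _ ≤ ENNReal.ofReal ((1 - r * (H + 1/2))⁻¹ ^ (1/r) * (1/2 - H)⁻¹ * t₁ ^ (1/r - 2*H)) * cq :=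
        mul_le_mul_left (ENNReal.ofReal_le_ofReal hreal) _
    _ = ENNReal.ofReal ((1 - r * (H + 1/2))⁻¹ ^ (1/r) * (1/2 - H)⁻¹) * cq *
          ENNReal.ofReal (t₁ ^ (1/r - 2*H)) := by
        rw [ENNReal.ofReal_mul (mul_nonneg (Real.rpow_nonneg (inv_nonneg.2 (by linarith)) _)
          (inv_nonneg.2 h12.le))]
        ring

lemma fubini_step (H : ℝ) (hH1 : 0 < H) (hH2 : H < 1/2)
    (c : ℝ → ℝ) (hc : Measurable c)
    (hM : (∫⁻ v in Set.Ioi (0:ℝ), ENNReal.ofReal (v ^ (1/2 - H) * |c v|)) ≠ ⊤)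
    {t₁ : ℝ} (ht₁ : 1 ≤ t₁) :
    (∫⁻ t₂ in Set.Ioc 0 (t₁ - 1), ∫⁻ s₁ in Set.Ioc t₂ t₁, ∫⁻ s₂ in Set.Ioc 0 t₂,
        ENNReal.ofReal ((t₁ - s₁) ^ (-H - 1/2)) *
          (ENNReal.ofReal ((t₂ - s₂) ^ (-H - 1/2)) * ENNReal.ofReal |c (s₁ - s₂)|)) ≤
      ENNReal.ofReal ((1/2 - H)⁻¹ * (1/2 - H)⁻¹) *
        (∫⁻ v in Set.Ioi (0:ℝ), ENNReal.ofReal (v ^ (1/2 - H) * |c v|)) *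
        ENNReal.ofReal (t₁ ^ (1/2 - H)) := by
  have hp1 : (-1:ℝ) < -H - 1/2 := by linarith
  have h12 : (0:ℝ) < 1/2 - H := by linarith
  have ht₁0 : (0:ℝ) < t₁ := by linarith
  set M := ∫⁻ v in Set.Ioi (0:ℝ), ENNReal.ofReal (v ^ (1/2 - H) * |c v|) with hMd
  set W : ℝ → ℝ≥0∞ :=
    fun v => (Set.Ioi (0:ℝ)).indicator (fun v => ENNReal.ofReal (v ^ (1/2 - H) * |c v|)) v
    with hWd
  have hWmeas : Measurable W :=
    (by fun_prop : Measurable fun v : ℝ => ENNReal.ofReal (v ^ (1/2 - H) * |c v|)).indicator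
      measurableSet_Ioi
  have hWint : ∀ s₁ : ℝ, (∫⁻ s₂, W (s₁ - s₂)) = M := fun s₁ => by
    rw [(Measure.measurePreserving_sub_left (volume : Measure ℝ) s₁).lintegral_comp hWmeas,
      hWd, lintegral_indicator measurableSet_Ioi, hMd]
  set K : ℝ → ℝ → ℝ → ℝ≥0∞ := fun t₂ s₁ s₂ =>
    ENNReal.ofReal ((t₁ - s₁) ^ (-H - 1/2)) *
      (ENNReal.ofReal ((t₂ - s₂) ^ (-H - 1/2)) * ENNReal.ofReal |c (s₁ - s₂)|) with hK
  set Φ : ℝ → ℝ → ℝ → ℝ≥0∞ := fun t₂ s₁ s₂ =>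
    (Set.Ioc (0:ℝ) (t₁ - 1)).indicator 1 t₂ *
      ((Set.Ioc t₂ t₁).indicator 1 s₁ *
        ((Set.Ioc (0:ℝ) t₂).indicator 1 s₂ * K t₂ s₁ s₂)) with hΦ
  have step1 : (∫⁻ t₂ in Set.Ioc 0 (t₁ - 1), ∫⁻ s₁ in Set.Ioc t₂ t₁, ∫⁻ s₂ in Set.Ioc 0 t₂,
      K t₂ s₁ s₂) = ∫⁻ t₂, ∫⁻ s₁, ∫⁻ s₂, Φ t₂ s₁ s₂ := by
    rw [setLIntegral_eq_ind measurableSet_Ioc]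
    refine lintegral_congr fun t₂ => ?_
    rw [setLIntegral_eq_ind measurableSet_Ioc, ← lintegral_const_mul' _ _ (ind_ne_top _ _)]
    refine lintegral_congr fun s₁ => ?_
    rw [setLIntegral_eq_ind measurableSet_Ioc, ← lintegral_const_mul' _ _ (ind_ne_top _ _),
      ← lintegral_const_mul' _ _ (ind_ne_top _ _)]
  have hΦmeas : Measurable fun p : (ℝ × ℝ) × ℝ => Φ p.1.1 p.1.2 p.2 := by
    simp only [hΦ, hK, Set.indicator_apply, Set.mem_Ioc, Pi.one_apply]
    refine Measurable.mul ?_ (Measurable.mul ?_ (Measurable.mul ?_ ?_))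
    · exact Measurable.ite
        (((measurableSet_lt measurable_const (measurable_fst.comp measurable_fst)).inter
          (measurableSet_le (measurable_fst.comp measurable_fst) measurable_const)))
        measurable_const measurable_const
    · exact Measurable.ite
        (((measurableSet_lt (measurable_fst.comp measurable_fst)
            (measurable_snd.comp measurable_fst)).inter
          (measurableSet_le (measurable_snd.comp measurable_fst) measurable_const)))
        measurable_const measurable_const
    · exact Measurable.ite
        (((measurableSet_lt measurable_const measurable_snd).inter
          (measurableSet_le measurable_snd (measurable_fst.comp measurable_fst))))
        measurable_const measurable_const
    · fun_prop
  have step2 : (∫⁻ t₂, ∫⁻ s₁, ∫⁻ s₂, Φ t₂ s₁ s₂) = ∫⁻ s₁, ∫⁻ s₂, ∫⁻ t₂, Φ t₂ s₁ s₂ :=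
    calc (∫⁻ t₂, ∫⁻ s₁, ∫⁻ s₂, Φ t₂ s₁ s₂) = ∫⁻ s₁, ∫⁻ t₂, ∫⁻ s₂, Φ t₂ s₁ s₂ :=
        lintegral_lintegral_swap (hΦmeas.lintegral_prod_right').aemeasurable
      _ = ∫⁻ s₁, ∫⁻ s₂, ∫⁻ t₂, Φ t₂ s₁ s₂ := lintegral_congr fun s₁ =>
        lintegral_lintegral_swap (hΦmeas.comp
          ((measurable_fst.prodMk measurable_const).prodMk measurable_snd)).aemeasurable
  have hWeq : ∀ v : ℝ,
      ENNReal.ofReal |c v| * (Set.Ioi (0:ℝ)).indicator (fun u => ENNReal.ofReal (u ^ (1/2 - H))) v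
        = W v := by
    intro v
    by_cases h : v ∈ Set.Ioi (0:ℝ)
    · rw [hWd]
      simp only [Set.indicator_of_mem h]
      rw [← ENNReal.ofReal_mul (abs_nonneg _), mul_comm (|c v|)]
    · rw [hWd]
      simp [Set.indicator_of_notMem h]
  have hptw : ∀ s₁ s₂ : ℝ, (∫⁻ t₂, Φ t₂ s₁ s₂) ≤
      (Set.Ioc (0:ℝ) t₁).indicator 1 s₁ *
        (ENNReal.ofReal ((t₁ - s₁) ^ (-H - 1/2)) *
          (ENNReal.ofReal ((1/2 - H)⁻¹) * W (s₁ - s₂))) := by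
    intro s₁ s₂
    set C : ℝ≥0∞ := (Set.Ioc (0:ℝ) t₁).indicator 1 s₁ *
      (ENNReal.ofReal ((t₁ - s₁) ^ (-H - 1/2)) * ENNReal.ofReal |c (s₁ - s₂)|) with hC
    have hCtop : C ≠ ⊤ := ENNReal.mul_ne_top (ind_ne_top _ _)
      (ENNReal.mul_ne_top ENNReal.ofReal_ne_top ENNReal.ofReal_ne_top)
    have pt : ∀ t₂ : ℝ, Φ t₂ s₁ s₂ ≤
        C * ((Set.Ico s₂ s₁).indicator 1 t₂ * ENNReal.ofReal ((t₂ - s₂) ^ (-H - 1/2))) := by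
      intro t₂
      by_cases h1 : t₂ ∈ Set.Ioc (0:ℝ) (t₁ - 1)
      · by_cases h2 : s₁ ∈ Set.Ioc t₂ t₁
        · by_cases h3 : s₂ ∈ Set.Ioc (0:ℝ) t₂
          · have m1 : s₁ ∈ Set.Ioc (0:ℝ) t₁ := ⟨lt_trans h1.1 h2.1, h2.2⟩
            have m2 : t₂ ∈ Set.Ico s₂ s₁ := ⟨h3.2, h2.1⟩
            rw [hΦ, hC]
            simp only [Set.indicator_of_mem h1, Set.indicator_of_mem h2,
              Set.indicator_of_mem h3, Set.indicator_of_mem m1, Set.indicator_of_mem m2,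
              Pi.one_apply, one_mul, hK]
            exact le_of_eq (by ring)
          · rw [hΦ]; simp [Set.indicator_of_notMem h3]
        · rw [hΦ]; simp [Set.indicator_of_notMem h2]
      · rw [hΦ]; simp [Set.indicator_of_notMem h1]
    have hker : (∫⁻ t₂ in Set.Ico s₂ s₁, ENNReal.ofReal ((t₂ - s₂) ^ (-H - 1/2))) ≤
        ENNReal.ofReal ((1/2 - H)⁻¹) *
          (Set.Ioi (0:ℝ)).indicator (fun u => ENNReal.ofReal (u ^ (1/2 - H))) (s₁ - s₂) := by
      by_cases hss : s₂ < s₁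
      · rw [setLIntegral_congr Ico_ae_eq_Ioc, lint_rpow_sub_right hp1 hss.le,
          Set.indicator_of_mem (by simpa using sub_pos.2 hss)]
        rw [← ENNReal.ofReal_mul (inv_nonneg.2 h12.le)]
        apply ENNReal.ofReal_le_ofReal
        rw [show (-H - 1/2 + 1 : ℝ) = 1/2 - H by ring, div_eq_mul_inv ((s₁ - s₂) ^ (1/2 - H))]
        exact le_of_eq (mul_comm _ _)
      · rw [Set.Ico_eq_empty hss, Measure.restrict_empty, lintegral_zero_measure]
        exact zero_le
    calc (∫⁻ t₂, Φ t₂ s₁ s₂)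
        ≤ ∫⁻ t₂, C * ((Set.Ico s₂ s₁).indicator 1 t₂ *
            ENNReal.ofReal ((t₂ - s₂) ^ (-H - 1/2))) := lintegral_mono pt
      _ = C * ∫⁻ t₂ in Set.Ico s₂ s₁, ENNReal.ofReal ((t₂ - s₂) ^ (-H - 1/2)) := by
          rw [lintegral_const_mul' _ _ hCtop, setLIntegral_eq_ind measurableSet_Ico]
      _ ≤ C * (ENNReal.ofReal ((1/2 - H)⁻¹) *
            (Set.Ioi (0:ℝ)).indicator (fun u => ENNReal.ofReal (u ^ (1/2 - H))) (s₁ - s₂)) :=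
          mul_le_mul_right hker _
      _ = (Set.Ioc (0:ℝ) t₁).indicator 1 s₁ *
            (ENNReal.ofReal ((t₁ - s₁) ^ (-H - 1/2)) *
              (ENNReal.ofReal ((1/2 - H)⁻¹) *
                (ENNReal.ofReal |c (s₁ - s₂)| *
                  (Set.Ioi (0:ℝ)).indicator (fun u => ENNReal.ofReal (u ^ (1/2 - H)))
                    (s₁ - s₂)))) := by
          rw [hC]; ring
      _ = (Set.Ioc (0:ℝ) t₁).indicator 1 s₁ *
            (ENNReal.ofReal ((t₁ - s₁) ^ (-H - 1/2)) *
              (ENNReal.ofReal ((1/2 - H)⁻¹) * W (s₁ - s₂))) := by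
          rw [hWeq (s₁ - s₂)]
  calc (∫⁻ t₂ in Set.Ioc 0 (t₁ - 1), ∫⁻ s₁ in Set.Ioc t₂ t₁, ∫⁻ s₂ in Set.Ioc 0 t₂, K t₂ s₁ s₂)
      = ∫⁻ s₁, ∫⁻ s₂, ∫⁻ t₂, Φ t₂ s₁ s₂ := by rw [step1, step2]
    _ ≤ ∫⁻ s₁, ∫⁻ s₂, (Set.Ioc (0:ℝ) t₁).indicator 1 s₁ *
          (ENNReal.ofReal ((t₁ - s₁) ^ (-H - 1/2)) *
            (ENNReal.ofReal ((1/2 - H)⁻¹) * W (s₁ - s₂))) :=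
        lintegral_mono fun s₁ => lintegral_mono fun s₂ => hptw s₁ s₂
    _ = ∫⁻ s₁, ((Set.Ioc (0:ℝ) t₁).indicator 1 s₁ *
          (ENNReal.ofReal ((t₁ - s₁) ^ (-H - 1/2)) * ENNReal.ofReal ((1/2 - H)⁻¹))) * M := by
        refine lintegral_congr fun s₁ => ?_
        calc (∫⁻ s₂, (Set.Ioc (0:ℝ) t₁).indicator 1 s₁ *
              (ENNReal.ofReal ((t₁ - s₁) ^ (-H - 1/2)) *
                (ENNReal.ofReal ((1/2 - H)⁻¹) * W (s₁ - s₂))))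
            = ∫⁻ s₂, ((Set.Ioc (0:ℝ) t₁).indicator 1 s₁ *
                (ENNReal.ofReal ((t₁ - s₁) ^ (-H - 1/2)) * ENNReal.ofReal ((1/2 - H)⁻¹))) *
                  W (s₁ - s₂) := lintegral_congr fun s₂ => by ring
          _ = ((Set.Ioc (0:ℝ) t₁).indicator 1 s₁ *
                (ENNReal.ofReal ((t₁ - s₁) ^ (-H - 1/2)) * ENNReal.ofReal ((1/2 - H)⁻¹))) * M := by
              rw [lintegral_const_mul' _ _ (ENNReal.mul_ne_top (ind_ne_top _ _)
                (ENNReal.mul_ne_top ENNReal.ofReal_ne_top ENNReal.ofReal_ne_top)), hWint s₁]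
    _ = (∫⁻ s₁ in Set.Ioc (0:ℝ) t₁, ENNReal.ofReal ((t₁ - s₁) ^ (-H - 1/2))) *
          (ENNReal.ofReal ((1/2 - H)⁻¹) * M) := by
        rw [setLIntegral_eq_ind measurableSet_Ioc,
          ← lintegral_mul_const' _ _ (ENNReal.mul_ne_top ENNReal.ofReal_ne_top hM)]
        refine lintegral_congr fun s₁ => ?_
        ring
    _ = ENNReal.ofReal (t₁ ^ (-H - 1/2 + 1) / (-H - 1/2 + 1)) *
          (ENNReal.ofReal ((1/2 - H)⁻¹) * M) := by
        rw [lint_rpow_sub_left hp1 ht₁0.le, sub_zero]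
    _ = ENNReal.ofReal ((1/2 - H)⁻¹ * (1/2 - H)⁻¹) * M * ENNReal.ofReal (t₁ ^ (1/2 - H)) := by
        rw [show (-H - 1/2 + 1 : ℝ) = 1/2 - H by ring, div_eq_mul_inv (t₁ ^ (1/2 - H)),
          ENNReal.ofReal_mul (Real.rpow_nonneg ht₁0.le _),
          ENNReal.ofReal_mul (inv_nonneg.2 h12.le)]
        ring


/-- Bound for the term `I_{2,2}(T)`: for `H ∈ (0,1/2)`, `r ∈ (1,(H+1/2)⁻¹)`, `q = r/(r-1)`,
and an even `c ∈ L^q(ℝ)` with `∫₀^∞ v^{1/2-H}|c(v)| dv < ∞`, there is `C > 0` such that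
for all `T ≥ 1`,
`(1/T²) ∫₁^T ∫₀^{t₁-1} (∫_{t₂}^{t₁}∫₀^{t₂} (t₁-s₁)^{-H-1/2}(t₂-s₂)^{-H-1/2}|c(s₁-s₂)| ds₂ ds₁)² dt₂ dt₁
  ≤ C T^{1/r - 1/2 - 3H}`. -/
theorem stmt_7 (H r q : ℝ) (hH : H ∈ Set.Ioo (0 : ℝ) (1/2))
    (hr : r ∈ Set.Ioo (1 : ℝ) (H + 1/2)⁻¹) (hq : q = r / (r - 1))
    (c : ℝ → ℝ) (hc : Measurable c) (heven : ∀ t : ℝ, c (-t) = c t)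
    (hLq : eLpNorm c (ENNReal.ofReal q) volume < ⊤)
    (hmom : IntegrableOn (fun v : ℝ => v ^ (1/2 - H) * |c v|) (Set.Ioi (0 : ℝ))) :
    ∃ C > 0, ∀ T ≥ (1 : ℝ),
      (1 / T ^ 2) * ∫ t₁ in (1 : ℝ)..T, ∫ t₂ in (0 : ℝ)..(t₁ - 1),
          (∫ s₁ in t₂..t₁, ∫ s₂ in (0 : ℝ)..t₂,
            (t₁ - s₁) ^ (-H - 1/2) * (t₂ - s₂) ^ (-H - 1/2) * |c (s₁ - s₂)|) ^ 2 ≤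
        C * T ^ (1/r - 1/2 - 3*H) := by
  obtain ⟨hH1, hH2⟩ := hH
  obtain ⟨hr1, hr2⟩ := hr
  have hr0 : (0:ℝ) < r := by linarith
  have ha_pos : (0:ℝ) < H + 1/2 := by linarith
  have hra : r * (H + 1/2) < 1 := by
    have h := mul_lt_mul_of_pos_right hr2 ha_pos
    rwa [inv_mul_cancel₀ ha_pos.ne'] at h
  have hpq : r.HolderConjugate q := (Real.holderConjugate_iff_eq_conjExponent hr1).2 hq
  have hγpos : (0:ℝ) < 1/r + 1/2 - 3*H := by
    have h1r : H + 1/2 < 1/r := by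
      rw [lt_div_iff₀ hr0]; nlinarith
    linarith
  have hcq : eLpNorm c (ENNReal.ofReal q) volume ≠ ⊤ := hLq.ne
  have hMnn : 0 ≤ᵐ[volume.restrict (Set.Ioi (0:ℝ))] fun v : ℝ => v ^ (1/2 - H) * |c v| :=
    (ae_restrict_iff' measurableSet_Ioi).2 (ae_of_all _ fun v hv =>
      mul_nonneg (Real.rpow_nonneg (le_of_lt hv) _) (abs_nonneg _))
  have hM : (∫⁻ v in Set.Ioi (0:ℝ), ENNReal.ofReal (v ^ (1/2 - H) * |c v|)) ≠ ⊤ := by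
    rw [← ofReal_integral_eq_lintegral_ofReal hmom hMnn]
    exact ENNReal.ofReal_ne_top
  set cq := eLpNorm c (ENNReal.ofReal q) volume with hcqd
  set M := ∫⁻ v in Set.Ioi (0:ℝ), ENNReal.ofReal (v ^ (1/2 - H) * |c v|) with hMd
  set A := ENNReal.ofReal ((1 - r * (H + 1/2))⁻¹ ^ (1/r) * (1/2 - H)⁻¹) * cq with hAd
  set B := ENNReal.ofReal ((1/2 - H)⁻¹ * (1/2 - H)⁻¹) * M with hBd
  have hA : A ≠ ⊤ := ENNReal.mul_ne_top ENNReal.ofReal_ne_top hcq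
  have hB : B ≠ ⊤ := ENNReal.mul_ne_top ENNReal.ofReal_ne_top hM
  refine ⟨(A * B).toReal + 1, by positivity, fun T hT => ?_⟩
  have hT0 : (0:ℝ) < T := by linarith
  set J : ℝ → ℝ → ℝ≥0∞ := fun u₁ u₂ => ∫⁻ s₁ in Set.Ioc u₂ u₁, ∫⁻ s₂ in Set.Ioc 0 u₂,
      ENNReal.ofReal ((u₁ - s₁) ^ (-H - 1/2)) *
        (ENNReal.ofReal ((u₂ - s₂) ^ (-H - 1/2)) * ENNReal.ofReal |c (s₁ - s₂)|) with hJd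
  have hJle : ∀ t₁ t₂ : ℝ, 0 < t₂ → t₂ ≤ t₁ →
      J t₁ t₂ ≤ A * ENNReal.ofReal (t₁ ^ (1/r - 2*H)) := by
    intro t₁ t₂ h0 h1
    have h := holder_step H r q hH2 hr1 hra hpq c hc hcq h0 h1
    rw [← hcqd, ← hAd] at h
    exact h
  have hJtop : ∀ t₁ t₂ : ℝ, 0 < t₂ → t₂ ≤ t₁ → J t₁ t₂ ≠ ⊤ := fun t₁ t₂ h0 h1 =>
    ((hJle t₁ t₂ h0 h1).trans_lt (lt_top_iff_ne_top.2
      (ENNReal.mul_ne_top hA ENNReal.ofReal_ne_top))).ne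
  have hGle : ∀ t₁ : ℝ, 1 ≤ t₁ → (∫⁻ t₂ in Set.Ioc 0 (t₁-1), J t₁ t₂ ^ 2)
      ≤ A * B * ENNReal.ofReal (t₁ ^ (1/r + 1/2 - 3*H)) := by
    intro t₁ h1
    have ht₁0 : (0:ℝ) < t₁ := by linarith
    calc (∫⁻ t₂ in Set.Ioc 0 (t₁-1), J t₁ t₂ ^ 2)
        ≤ ∫⁻ t₂ in Set.Ioc 0 (t₁-1), (A * ENNReal.ofReal (t₁ ^ (1/r - 2*H))) * J t₁ t₂ := by
          refine lintegral_mono_ae ((ae_restrict_iff' measurableSet_Ioc).2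
            (ae_of_all _ fun t₂ ht₂ => ?_))
          rw [pow_two]
          exact mul_le_mul_left (hJle t₁ t₂ ht₂.1 (by linarith [ht₂.2])) _
      _ = (A * ENNReal.ofReal (t₁ ^ (1/r - 2*H))) * ∫⁻ t₂ in Set.Ioc 0 (t₁-1), J t₁ t₂ :=
          lintegral_const_mul' _ _ (ENNReal.mul_ne_top hA ENNReal.ofReal_ne_top)
      _ ≤ (A * ENNReal.ofReal (t₁ ^ (1/r - 2*H))) * (B * ENNReal.ofReal (t₁ ^ (1/2 - H))) := by
          refine mul_le_mul_right ?_ _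
          have h := fubini_step H hH1 hH2 c hc hM h1
          rw [← hMd, ← hBd] at h
          exact h
      _ = A * B * ENNReal.ofReal (t₁ ^ (1/r + 1/2 - 3*H)) := by
          rw [show (1/r + 1/2 - 3*H : ℝ) = (1/r - 2*H) + (1/2 - H) by ring,
            Real.rpow_add ht₁0, ENNReal.ofReal_mul (Real.rpow_nonneg ht₁0.le _)]
          ring
  have hIle : (∫⁻ t₁ in Set.Ioc 1 T, ∫⁻ t₂ in Set.Ioc 0 (t₁-1), J t₁ t₂ ^ 2)
      ≤ A * B * ENNReal.ofReal (T ^ (1/r + 1/2 - 3*H) * T) := by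
    calc (∫⁻ t₁ in Set.Ioc 1 T, ∫⁻ t₂ in Set.Ioc 0 (t₁-1), J t₁ t₂ ^ 2)
        ≤ ∫⁻ _ in Set.Ioc (1:ℝ) T, A * B * ENNReal.ofReal (T ^ (1/r + 1/2 - 3*H)) := by
          refine lintegral_mono_ae ((ae_restrict_iff' measurableSet_Ioc).2
            (ae_of_all _ fun t₁ h => ?_))
          refine (hGle t₁ h.1.le).trans (mul_le_mul_right (ENNReal.ofReal_le_ofReal
            (Real.rpow_le_rpow (by linarith [h.1]) h.2 hγpos.le)) _)
      _ = A * B * ENNReal.ofReal (T ^ (1/r + 1/2 - 3*H)) * volume (Set.Ioc (1:ℝ) T) :=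
          setLIntegral_const _ _
      _ = A * B * ENNReal.ofReal (T ^ (1/r + 1/2 - 3*H)) * ENNReal.ofReal (T - 1) := by
          rw [Real.volume_Ioc]
      _ ≤ A * B * ENNReal.ofReal (T ^ (1/r + 1/2 - 3*H)) * ENNReal.ofReal T :=
          mul_le_mul_right (ENNReal.ofReal_le_ofReal (by linarith)) _
      _ = A * B * ENNReal.ofReal (T ^ (1/r + 1/2 - 3*H) * T) := by
          rw [mul_assoc (A * B), ← ENNReal.ofReal_mul (Real.rpow_nonneg hT0.le _)]
  have hJrle : ∀ t₁ t₂ : ℝ, 0 < t₂ → t₂ ≤ t₁ →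
      (∫ s₁ in t₂..t₁, ∫ s₂ in (0:ℝ)..t₂,
        (t₁ - s₁) ^ (-H - 1/2) * (t₂ - s₂) ^ (-H - 1/2) * |c (s₁ - s₂)|)
        ≤ (J t₁ t₂).toReal := by
    intro t₁ t₂ h0 h1
    rw [intervalIntegral.integral_of_le h1]
    refine le_trans (int_le_lint measurableSet_Ioc fun s₁ hs₁ =>
      intervalIntegral.integral_nonneg h0.le fun s₂ hs₂ =>
        mul_nonneg (mul_nonneg (Real.rpow_nonneg (by linarith [hs₁.2]) _)
          (Real.rpow_nonneg (by linarith [hs₂.2]) _)) (abs_nonneg _)) ?_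
    refine ENNReal.toReal_mono (hJtop t₁ t₂ h0 h1) ?_
    refine lintegral_mono_ae ((ae_restrict_iff' measurableSet_Ioc).2
      (ae_of_all _ fun s₁ hs₁ => ?_))
    have inner_eq : (∫⁻ s₂ in Set.Ioc 0 t₂,
        ENNReal.ofReal ((t₁ - s₁) ^ (-H - 1/2) * (t₂ - s₂) ^ (-H - 1/2) * |c (s₁ - s₂)|))
        = ∫⁻ s₂ in Set.Ioc 0 t₂, ENNReal.ofReal ((t₁ - s₁) ^ (-H - 1/2)) *
            (ENNReal.ofReal ((t₂ - s₂) ^ (-H - 1/2)) * ENNReal.ofReal |c (s₁ - s₂)|) := by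
      refine setLIntegral_congr_fun_ae measurableSet_Ioc (ae_of_all _ fun s₂ hs₂ => ?_)
      rw [ENNReal.ofReal_mul (mul_nonneg (Real.rpow_nonneg (by linarith [hs₁.2]) _)
        (Real.rpow_nonneg (by linarith [hs₂.2]) _)),
        ENNReal.ofReal_mul (Real.rpow_nonneg (by linarith [hs₁.2]) _), mul_assoc]
    calc ENNReal.ofReal (∫ s₂ in (0:ℝ)..t₂,
          (t₁ - s₁) ^ (-H - 1/2) * (t₂ - s₂) ^ (-H - 1/2) * |c (s₁ - s₂)|)
        ≤ ENNReal.ofReal ((∫⁻ s₂ in Set.Ioc 0 t₂, ENNReal.ofReal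
            ((t₁ - s₁) ^ (-H - 1/2) * (t₂ - s₂) ^ (-H - 1/2) * |c (s₁ - s₂)|)).toReal) := by
          apply ENNReal.ofReal_le_ofReal
          rw [intervalIntegral.integral_of_le h0.le]
          exact int_le_lint measurableSet_Ioc fun s₂ hs₂ =>
            mul_nonneg (mul_nonneg (Real.rpow_nonneg (by linarith [hs₁.2]) _)
              (Real.rpow_nonneg (by linarith [hs₂.2]) _)) (abs_nonneg _)
      _ ≤ ∫⁻ s₂ in Set.Ioc 0 t₂, ENNReal.ofReal
            ((t₁ - s₁) ^ (-H - 1/2) * (t₂ - s₂) ^ (-H - 1/2) * |c (s₁ - s₂)|) :=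
          ENNReal.ofReal_toReal_le
      _ = _ := inner_eq
  have hJr_nonneg : ∀ t₁ t₂ : ℝ, 0 ≤ t₂ → t₂ ≤ t₁ →
      0 ≤ ∫ s₁ in t₂..t₁, ∫ s₂ in (0:ℝ)..t₂,
        (t₁ - s₁) ^ (-H - 1/2) * (t₂ - s₂) ^ (-H - 1/2) * |c (s₁ - s₂)| := by
    intro t₁ t₂ h0 h1
    refine intervalIntegral.integral_nonneg h1 fun s₁ hs₁ => ?_
    refine intervalIntegral.integral_nonneg h0 fun s₂ hs₂ => ?_
    exact mul_nonneg (mul_nonneg (Real.rpow_nonneg (by linarith [hs₁.2]) _)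
      (Real.rpow_nonneg (by linarith [hs₂.2]) _)) (abs_nonneg _)
  have hGr_le : ∀ t₁ : ℝ, 1 ≤ t₁ →
      ENNReal.ofReal (∫ t₂ in (0:ℝ)..(t₁-1),
        (∫ s₁ in t₂..t₁, ∫ s₂ in (0:ℝ)..t₂,
          (t₁ - s₁) ^ (-H - 1/2) * (t₂ - s₂) ^ (-H - 1/2) * |c (s₁ - s₂)|) ^ 2)
        ≤ ∫⁻ t₂ in Set.Ioc 0 (t₁-1), J t₁ t₂ ^ 2 := by
    intro t₁ h1
    calc ENNReal.ofReal (∫ t₂ in (0:ℝ)..(t₁-1), (∫ s₁ in t₂..t₁, ∫ s₂ in (0:ℝ)..t₂,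
            (t₁ - s₁) ^ (-H - 1/2) * (t₂ - s₂) ^ (-H - 1/2) * |c (s₁ - s₂)|) ^ 2)
        ≤ ENNReal.ofReal ((∫⁻ t₂ in Set.Ioc 0 (t₁-1), ENNReal.ofReal
            ((∫ s₁ in t₂..t₁, ∫ s₂ in (0:ℝ)..t₂,
              (t₁ - s₁) ^ (-H - 1/2) * (t₂ - s₂) ^ (-H - 1/2) * |c (s₁ - s₂)|) ^ 2)).toReal) := by
          apply ENNReal.ofReal_le_ofReal
          rw [intervalIntegral.integral_of_le (by linarith : (0:ℝ) ≤ t₁ - 1)]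
          exact int_le_lint measurableSet_Ioc fun t₂ ht₂ => sq_nonneg _
      _ ≤ ∫⁻ t₂ in Set.Ioc 0 (t₁-1), ENNReal.ofReal
            ((∫ s₁ in t₂..t₁, ∫ s₂ in (0:ℝ)..t₂,
              (t₁ - s₁) ^ (-H - 1/2) * (t₂ - s₂) ^ (-H - 1/2) * |c (s₁ - s₂)|) ^ 2) :=
          ENNReal.ofReal_toReal_le
      _ ≤ ∫⁻ t₂ in Set.Ioc 0 (t₁-1), J t₁ t₂ ^ 2 := by
          refine lintegral_mono_ae ((ae_restrict_iff' measurableSet_Ioc).2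
            (ae_of_all _ fun t₂ ht₂ => ?_))
          have h2 : t₂ ≤ t₁ := by linarith [ht₂.2]
          calc ENNReal.ofReal ((∫ s₁ in t₂..t₁, ∫ s₂ in (0:ℝ)..t₂,
                (t₁ - s₁) ^ (-H - 1/2) * (t₂ - s₂) ^ (-H - 1/2) * |c (s₁ - s₂)|) ^ 2)
              ≤ ENNReal.ofReal (((J t₁ t₂).toReal) ^ 2) := ENNReal.ofReal_le_ofReal
                (pow_le_pow_left₀ (hJr_nonneg t₁ t₂ ht₂.1.le h2) (hJrle t₁ t₂ ht₂.1 h2) 2)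
            _ = ENNReal.ofReal ((J t₁ t₂ ^ 2).toReal) := by rw [← ENNReal.toReal_pow]
            _ ≤ J t₁ t₂ ^ 2 := ENNReal.ofReal_toReal_le
  have hL : (∫ t₁ in (1:ℝ)..T, ∫ t₂ in (0:ℝ)..(t₁-1),
        (∫ s₁ in t₂..t₁, ∫ s₂ in (0:ℝ)..t₂,
          (t₁ - s₁) ^ (-H - 1/2) * (t₂ - s₂) ^ (-H - 1/2) * |c (s₁ - s₂)|) ^ 2)
      ≤ (A * B * ENNReal.ofReal (T ^ (1/r + 1/2 - 3*H) * T)).toReal := by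
    rw [intervalIntegral.integral_of_le hT]
    refine le_trans (int_le_lint measurableSet_Ioc fun t₁ ht₁ =>
      intervalIntegral.integral_nonneg (by linarith [ht₁.1]) fun t₂ _ => sq_nonneg _) ?_
    refine ENNReal.toReal_mono (ENNReal.mul_ne_top (ENNReal.mul_ne_top hA hB)
      ENNReal.ofReal_ne_top) ?_
    refine le_trans ?_ hIle
    exact lintegral_mono_ae ((ae_restrict_iff' measurableSet_Ioc).2
      (ae_of_all _ fun t₁ ht₁ => hGr_le t₁ ht₁.1.le))
  have hrw : (A * B * ENNReal.ofReal (T ^ (1/r + 1/2 - 3*H) * T)).toReal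
      = (A * B).toReal * (T ^ (1/r + 1/2 - 3*H) * T) := by
    rw [ENNReal.toReal_mul, ENNReal.toReal_ofReal
      (mul_nonneg (Real.rpow_nonneg hT0.le _) hT0.le)]
  have hkey : T ^ (1/r + 1/2 - 3*H) * T = T ^ (1/r - 1/2 - 3*H) * T^2 := by
    rw [show (1/r + 1/2 - 3*H : ℝ) = (1/r - 1/2 - 3*H) + 1 by ring, Real.rpow_add hT0,
      Real.rpow_one]
    ring
  calc (1 / T ^ 2) * ∫ t₁ in (1:ℝ)..T, ∫ t₂ in (0:ℝ)..(t₁-1),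
        (∫ s₁ in t₂..t₁, ∫ s₂ in (0:ℝ)..t₂,
          (t₁ - s₁) ^ (-H - 1/2) * (t₂ - s₂) ^ (-H - 1/2) * |c (s₁ - s₂)|) ^ 2
      ≤ (1 / T ^ 2) * ((A * B).toReal * (T ^ (1/r + 1/2 - 3*H) * T)) := by
        refine mul_le_mul_of_nonneg_left (hL.trans (le_of_eq hrw)) (by positivity)
    _ = (A * B).toReal * T ^ (1/r - 1/2 - 3*H) := by
        rw [hkey]
        field_simp
    _ ≤ ((A * B).toReal + 1) * T ^ (1/r - 1/2 - 3*H) :=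
        mul_le_mul_of_nonneg_right (by linarith) (Real.rpow_nonneg hT0.le _)
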